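/- The polynomial f(x) = x^6 + x^5 − x^4 − 2x^3 + x + 1 over ℚ is 3-regular: no product of three of its roots with distinct indices equals 1. -/

import Mathlib

open Polynomial

/-- `f` is `k`-regular over `K`: no product of `k` roots of `f` (with distinct
indices, counting multiplicity) in an algebraic closure of `K` equals `1`. -/
def kRegular (K : Type*) [Field K] (f : Polynomial K) (k : ℕ) : Prop :=
  ∀ s : Multiset (AlgebraicClosure K),
    s ≤ (f.map (algebraMap K (AlgebraicClosure K))).roots →
    Multiset.card s = k → s.prod ≠ 1

theorem three_regular_example :
    kRegular ℚ (X ^ 6 + X ^ 5 - X ^ 4 - 2 * X ^ 3 + X + 1) 3 := by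
  intro s hs hcard hprod
  have hfm : (X ^ 6 + X ^ 5 - X ^ 4 - 2 * X ^ 3 + X + 1 : ℚ[X]).Monic := by monicity!
  have hfd : (X ^ 6 + X ^ 5 - X ^ 4 - 2 * X ^ 3 + X + 1 : ℚ[X]).natDegree = 6 := by
    compute_degree!
  set g : (AlgebraicClosure ℚ)[X] :=
    (X ^ 6 + X ^ 5 - X ^ 4 - 2 * X ^ 3 + X + 1 : ℚ[X]).map (algebraMap ℚ (AlgebraicClosure ℚ))
    with hg
  have hgm : g.Monic := hfm.map _
  have hgd : g.natDegree = 6 := by rw [hg, natDegree_map]; exact hfd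
  have hcr : Multiset.card g.roots = 6 := by
    rw [← hgd, ← splits_iff_card_roots]
    exact IsAlgClosed.splits _
  have hfact : (g.roots.map fun a => X - C a).prod = g :=
    prod_multiset_X_sub_C_of_monic_of_roots_card_eq hgm (hcr.trans hgd.symm)
  obtain ⟨u, hu⟩ := Multiset.le_iff_exists_add.mp hs
  have hucard : Multiset.card u = 3 := by
    have h6 := hcr; rw [show g.roots = s + u from hu] at h6; simp [hcard] at h6; omega
  set A : (AlgebraicClosure ℚ)[X] := (s.map fun a => X - C a).prod with hA
  set B : (AlgebraicClosure ℚ)[X] := (u.map fun a => X - C a).prod with hB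
  have hAB : A * B = g := by
    rw [hA, hB, ← Multiset.prod_add, ← Multiset.map_add, ← (show g.roots = s + u from hu), hfact]
  have hAm : A.Monic := monic_multiset_prod_of_monic _ _ fun a _ => monic_X_sub_C a
  have hBm : B.Monic := monic_multiset_prod_of_monic _ _ fun a _ => monic_X_sub_C a
  have hAd : A.natDegree = 3 := by
    rw [hA, natDegree_multiset_prod_X_sub_C_eq_card, hcard]
  have hBd : B.natDegree = 3 := by
    rw [hB, natDegree_multiset_prod_X_sub_C_eq_card, hucard]
  have hA0 : A.coeff 0 = -1 := by
    rw [coeff_zero_eq_eval_zero, hA, eval_multiset_prod, Multiset.map_map]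
    simp only [Function.comp, eval_sub, eval_X, eval_C, zero_sub]
    rw [show (s.map fun a => -a) = s.map (fun a => (-1) * a) by simp,
      Multiset.prod_map_mul]
    simp [Multiset.map_const', hcard, hprod]
  have hA3 : A.coeff 3 = 1 := by rw [← hAd]; exact hAm.coeff_natDegree
  have hB3 : B.coeff 3 = 1 := by rw [← hBd]; exact hBm.coeff_natDegree
  have hA4 : A.coeff 4 = 0 := coeff_eq_zero_of_natDegree_lt (by omega)
  have hA5 : A.coeff 5 = 0 := coeff_eq_zero_of_natDegree_lt (by omega)
  have hB4 : B.coeff 4 = 0 := coeff_eq_zero_of_natDegree_lt (by omega)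
  have hB5 : B.coeff 5 = 0 := coeff_eq_zero_of_natDegree_lt (by omega)
  have hgc : ∀ n, g.coeff n =
      algebraMap ℚ (AlgebraicClosure ℚ) ((X ^ 6 + X ^ 5 - X ^ 4 - 2 * X ^ 3 + X + 1 : ℚ[X]).coeff n) :=
    fun n => by rw [hg, coeff_map]
  have hg0 : g.coeff 0 = 1 := by rw [hgc]; norm_num [coeff_one, coeff_X]
  have hg1 : g.coeff 1 = 1 := by rw [hgc]; norm_num [coeff_one, coeff_X]
  have hg2 : g.coeff 2 = 0 := by rw [hgc]; norm_num [coeff_one, coeff_X]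
  have hg3 : g.coeff 3 = -2 := by rw [hgc]; norm_num [coeff_one, coeff_X]
  have hg4 : g.coeff 4 = -1 := by rw [hgc]; norm_num [coeff_one, coeff_X]
  have hg5 : g.coeff 5 = 1 := by rw [hgc]; norm_num [coeff_one, coeff_X]
  have hB0 : B.coeff 0 = -1 := by
    have h := hg0; rw [← hAB, mul_coeff_zero, hA0] at h
    linear_combination -h
  have key : ∀ n, (∑ k ∈ Finset.range (n+1), A.coeff k * B.coeff (n - k)) = g.coeff n := by
    intro n
    rw [← hAB, coeff_mul, Finset.Nat.sum_antidiagonal_eq_sum_range_succ_mk]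
  have e1 := key 1
  have e2 := key 2
  have e3 := key 3
  have e4 := key 4
  have e5 := key 5
  simp [Finset.sum_range_succ, hA0, hA3, hA4, hA5, hB0, hB3, hB4, hB5,
    hg1, hg2, hg3, hg4, hg5] at e1 e2 e3 e4 e5
  have hqw : A.coeff 1 * B.coeff 1 = 1 := by linear_combination e2 + e5
  have hpr : A.coeff 2 * B.coeff 2 = 0 := by linear_combination e4 + e1
  rcases mul_eq_zero.mp hpr with hp | hr
  · have hr : B.coeff 2 = 1 := by linear_combination e5 - hp
    have hq : A.coeff 1 = 0 := by
      linear_combination e3 - A.coeff 1 * hr - B.coeff 1 * hp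
    exact one_ne_zero (α := AlgebraicClosure ℚ)
      (by linear_combination -hqw + B.coeff 1 * hq)
  · have hp : A.coeff 2 = 1 := by linear_combination e5 - hr
    have hw : B.coeff 1 = 0 := by
      linear_combination e3 - A.coeff 1 * hr - B.coeff 1 * hp
    exact one_ne_zero (α := AlgebraicClosure ℚ)
      (by linear_combination -hqw + A.coeff 1 * hw)
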